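/- Let C be a real symmetric positive definite n×n matrix and let B be a real skew-symmetric n×n matrix (Bᵀ = −B). Then det(C) · det(C + B C⁻¹ Bᵀ) = (det(C + B))². -/

import Mathlib

open Matrix

/-- For `C` real symmetric positive definite and `B` real skew-symmetric,
`det C * det (C + B C⁻¹ Bᵀ) = (det (C + B))²`. -/
theorem det_mul_det_add_skew_eq_sq {n : ℕ} (C B : Matrix (Fin n) (Fin n) ℝ)
    (hC : C.PosDef) (hB : Bᵀ = -B) :
    C.det * (C + B * C⁻¹ * Bᵀ).det = ((C + B).det) ^ 2 := by
  have hCt : Cᵀ = C := by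
    have := hC.isHermitian
    simpa [Matrix.IsHermitian, Matrix.conjTranspose_eq_transpose_of_trivial] using this
  have hdet : C.det ≠ 0 := hC.det_pos.ne'
  have hinv : Invertible C := invertibleOfIsUnitDet C hdet.isUnit
  have h1 : C * C⁻¹ = 1 := mul_nonsing_inv C hdet.isUnit
  have h2 : C⁻¹ * C = 1 := nonsing_inv_mul C hdet.isUnit
  have key : C + B * C⁻¹ * Bᵀ = (C + B) * C⁻¹ * (C - B) := by
    rw [hB]
    have : (C + B) * C⁻¹ * (C - B)
        = C * C⁻¹ * C - C * C⁻¹ * B + B * C⁻¹ * C - B * C⁻¹ * B := by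
      noncomm_ring
    rw [this, h1, mul_assoc B C⁻¹ C, h2]
    noncomm_ring
  have htr : C - B = (C + B)ᵀ := by
    rw [Matrix.transpose_add, hCt, hB]
    abel
  have hdt : (C - B).det = (C + B).det := by rw [htr, det_transpose]
  rw [key, det_mul, det_mul, hdt, det_nonsing_inv, Ring.inverse_eq_inv']
  field_simp
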